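/- Let X be a Banach function space over ℝⁿ, λ_0 ∈ (0,1) and C ≥ 1, and suppose ‖m_{λ_0} f‖_X ≤ C‖f‖_X for all f ∈ X. Let γ = γ(n,λ_0) ∈ (0,1) be the constant for which m_{γη} f ≤ m_η(m_{λ_0} f) pointwise for all η ∈ (0,1), and set r := log C / log(1/γ). Then for every λ ∈ (0,1) and every f ∈ X, ‖m_λ f‖_X ≤ C² λ^{-r} ‖f‖_X. -/
import Mathlib


open MeasureTheory Set Filter
open scoped ENNReal Topology

noncomputable section

/-- A cube in `ℝⁿ` with sides parallel to the coordinate axes (positive side length). -/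
def IsCube {n : ℕ} (Q : Set (Fin n → ℝ)) : Prop :=
  ∃ (a : Fin n → ℝ) (h : ℝ), 0 < h ∧ Q = Set.Icc a (fun i => a i + h)

/-- The Hardy–Littlewood maximal operator: `Mf(x) = sup_{Q ∋ x} (1/|Q|) ∫_Q f`. -/
def maximal {n : ℕ} (f : (Fin n → ℝ) → ℝ≥0∞) (x : Fin n → ℝ) : ℝ≥0∞ :=
  ⨆ (Q : Set (Fin n → ℝ)) (_ : IsCube Q) (_ : x ∈ Q), (∫⁻ y in Q, f y) / volume Q

/-- The Hardy–Littlewood maximal operator restricted to a cube `Q`. -/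
def maximalOn {n : ℕ} (Q : Set (Fin n → ℝ)) (f : (Fin n → ℝ) → ℝ≥0∞)
    (x : Fin n → ℝ) : ℝ≥0∞ :=
  ⨆ (R : Set (Fin n → ℝ)) (_ : IsCube R) (_ : R ⊆ Q) (_ : x ∈ R),
    (∫⁻ y in R, f y) / volume R

/-- The non-increasing rearrangement `g*(t) = inf {α > 0 : |{y : g y > α}| ≤ t}`. -/
def rearr {n : ℕ} (g : (Fin n → ℝ) → ℝ≥0∞) (t : ℝ≥0∞) : ℝ≥0∞ :=
  sInf {α : ℝ≥0∞ | 0 < α ∧ volume {y | α < g y} ≤ t}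

/-- The `λ`-median (local) maximal operator `m_λ f(x) = sup_{Q ∋ x} (f χ_Q)*(λ|Q|)`. -/
def mMed {n : ℕ} (la : ℝ) (f : (Fin n → ℝ) → ℝ≥0∞) (x : Fin n → ℝ) : ℝ≥0∞ :=
  ⨆ (Q : Set (Fin n → ℝ)) (_ : IsCube Q) (_ : x ∈ Q),
    rearr (Q.indicator f) (ENNReal.ofReal la * volume Q)

/-- The (absolute value of a) real function viewed as an `ℝ≥0∞`-valued function. -/
def toE {n : ℕ} (f : (Fin n → ℝ) → ℝ) : (Fin n → ℝ) → ℝ≥0∞ :=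
  fun y => ENNReal.ofReal |f y|

/-- `x` is a Lebesgue density point of the set `E`. -/
def IsDensityPoint {n : ℕ} (E : Set (Fin n → ℝ)) (x : Fin n → ℝ) : Prop :=
  Tendsto (fun r : ℝ => volume (E ∩ Metric.ball x r) / volume (Metric.ball x r))
    (𝓝[>] (0 : ℝ)) (𝓝 1)

/-- `x` is a point of approximate continuity of `f`. -/
def ApproxContinuousAt {n : ℕ} (f : (Fin n → ℝ) → ℝ) (x : Fin n → ℝ) : Prop :=
  ∀ ε : ℝ, 0 < ε →
    Tendsto (fun r : ℝ =>
        volume ({y | ε ≤ |f y - f x|} ∩ Metric.ball x r) / volume (Metric.ball x r))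
      (𝓝[>] (0 : ℝ)) (𝓝 0)

/-- A Banach function space over `ℝⁿ`, described by its (Luxemburg) function norm on
nonnegative extended-real-valued measurable functions. The ideal property is encoded by
`mono`, the Fatou property by `fatou`, and the saturation property by `saturation`. -/
structure BanachFunctionSpace (n : ℕ) where
  N : ((Fin n → ℝ) → ℝ≥0∞) → ℝ≥0∞
  add_le : ∀ f g, N (fun x => f x + g x) ≤ N f + N g
  smul_eq : ∀ (c : ℝ≥0∞), c ≠ ∞ → ∀ f, N (fun x => c * f x) = c * N f
  mono : ∀ f g, (∀ᵐ x ∂(volume : Measure (Fin n → ℝ)), f x ≤ g x) → N f ≤ N g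
  eq_zero : ∀ f, N f = 0 → f =ᵐ[(volume : Measure (Fin n → ℝ))] 0
  fatou : ∀ F : ℕ → ((Fin n → ℝ) → ℝ≥0∞),
    (∀ j, ∀ᵐ x ∂(volume : Measure (Fin n → ℝ)), F j x ≤ F (j + 1) x) →
    N (fun x => ⨆ j, F j x) = ⨆ j, N (F j)
  saturation : ∀ E : Set (Fin n → ℝ), MeasurableSet E → 0 < volume E →
    ∃ F, F ⊆ E ∧ MeasurableSet F ∧ 0 < volume F ∧ N (F.indicator 1) ≠ ∞

/-- The associate (Köthe dual) norm of a function norm `N`: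
`‖g‖_{X'} = sup_{‖h‖_X ≤ 1} ∫ g h`. -/
def assocOf {n : ℕ} (N : ((Fin n → ℝ) → ℝ≥0∞) → ℝ≥0∞)
    (g : (Fin n → ℝ) → ℝ≥0∞) : ℝ≥0∞ :=
  ⨆ (h : (Fin n → ℝ) → ℝ≥0∞) (_ : N h ≤ 1), ∫⁻ x, g x * h x

/-- The norm of the space `X^{1/p}`: `‖f‖_{X^{1/p}} = ‖|f|^p‖_X^{1/p}`. -/
def powOf {n : ℕ} (N : ((Fin n → ℝ) → ℝ≥0∞) → ℝ≥0∞) (p : ℝ)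
    (f : (Fin n → ℝ) → ℝ≥0∞) : ℝ≥0∞ :=
  (N fun x => f x ^ p) ^ (1 / p)

/-- An operator `T` is bounded with respect to the function norm `N`. -/
def BoundedOn {n : ℕ} (N : ((Fin n → ℝ) → ℝ≥0∞) → ℝ≥0∞)
    (T : ((Fin n → ℝ) → ℝ≥0∞) → (Fin n → ℝ) → ℝ≥0∞) : Prop :=
  ∃ C : ℝ, 0 < C ∧ ∀ f, N (T f) ≤ ENNReal.ofReal C * N f

/-- `X` is `p`-convex. -/
def PConvex {n : ℕ} (N : ((Fin n → ℝ) → ℝ≥0∞) → ℝ≥0∞) (p : ℝ) : Prop :=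
  ∀ f g, N (fun x => (f x ^ p + g x ^ p) ^ (1 / p)) ≤ (N f ^ p + N g ^ p) ^ (1 / p)

/-- `X` is `q`-concave. -/
def QConcave {n : ℕ} (N : ((Fin n → ℝ) → ℝ≥0∞) → ℝ≥0∞) (q : ℝ) : Prop :=
  ∀ f g, (N f ^ q + N g ^ q) ^ (1 / q) ≤ N (fun x => (f x ^ q + g x ^ q) ^ (1 / q))

end


lemma rearr_anti' {n : ℕ} (g : (Fin n → ℝ) → ℝ≥0∞) {s t : ℝ≥0∞} (h : s ≤ t) :
    rearr g t ≤ rearr g s :=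
  sInf_le_sInf fun _ ⟨h1, h2⟩ => ⟨h1, h2.trans h⟩

lemma mMed_anti' {n : ℕ} {la la' : ℝ} (h : la' ≤ la) (f : (Fin n → ℝ) → ℝ≥0∞)
    (x : Fin n → ℝ) : mMed la f x ≤ mMed la' f x := by
  refine iSup_mono fun Q => iSup_mono fun _ => iSup_mono fun _ => ?_
  exact rearr_anti' _ (mul_le_mul_left (ENNReal.ofReal_le_ofReal h) _)

lemma arith_aux {ga la0 la C : ℝ} (hga0 : 0 < ga) (hga1 : ga < 1)
    (hla0 : la0 < 1) (hla_pos : 0 < la) (hla1 : la < 1) (hC : 1 ≤ C)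
    (k : ℕ) (hmin : ∀ j, j < k → la < ga ^ j * la0) :
    C ^ (k + 1) ≤ C ^ 2 * la ^ (-(Real.log C / Real.log (1 / ga))) := by
  set r : ℝ := Real.log C / Real.log (1 / ga) with hrdef
  have hCpos : (0 : ℝ) < C := lt_of_lt_of_le one_pos hC
  have hlogC : 0 ≤ Real.log C := Real.log_nonneg hC
  have hA : 0 < -Real.log ga := neg_pos.mpr (Real.log_neg hga0 hga1)
  have hlogga' : Real.log (1 / ga) = -Real.log ga := by
    rw [one_div, Real.log_inv]
  have hr : 0 ≤ r := div_nonneg hlogC (by rw [hlogga']; exact hA.le)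
  have hrpow1 : 1 ≤ la ^ (-r) := by
    have := Real.rpow_le_rpow_of_exponent_ge hla_pos hla1.le (neg_nonpos.mpr hr)
    rwa [Real.rpow_zero] at this
  rcases k with _ | m
  · rw [pow_one]
    nlinarith [mul_le_mul_of_nonneg_left hrpow1 (by positivity : (0:ℝ) ≤ C ^ 2)]
  · have h1 : la < ga ^ m := by
      have h0 := hmin m (by omega)
      have : ga ^ m * la0 ≤ ga ^ m * 1 := by
        have := pow_pos hga0 m
        nlinarith
      linarith
    have h2 : Real.log la < (m : ℝ) * Real.log ga := by
      have := Real.log_lt_log hla_pos h1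
      rwa [Real.log_pow] at this
    have hmB : (m : ℝ) * (-Real.log ga) ≤ -Real.log la := by nlinarith
    have hm_le : (m : ℝ) ≤ (-Real.log la) / (-Real.log ga) := (le_div_iff₀ hA).mpr hmB
    have hCm : C ^ m ≤ la ^ (-r) := by
      rw [Real.rpow_def_of_pos hla_pos]
      have hCe : C ^ m = Real.exp ((m : ℝ) * Real.log C) := by
        rw [Real.exp_nat_mul, Real.exp_log hCpos]
      rw [hCe, Real.exp_le_exp]
      have hrew : Real.log la * (-r) = (-Real.log la) / (-Real.log ga) * Real.log C := by
        rw [hrdef, hlogga']; ring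
      rw [hrew]
      exact mul_le_mul_of_nonneg_right hm_le hlogC
    calc C ^ (m + 1 + 1) = C ^ 2 * C ^ m := by ring
      _ ≤ C ^ 2 * la ^ (-r) := by
          exact mul_le_mul_of_nonneg_left hCm (by positivity)

/-- the blow-up bound `‖m_λ f‖_X ≤ C² λ^{-r} ‖f‖_X` with
`r = log C / log (1/γ)`. -/
theorem stmt10 (n : ℕ) (X : BanachFunctionSpace n) (la0 C : ℝ)
    (hla0 : la0 ∈ Set.Ioo (0 : ℝ) 1) (hC : 1 ≤ C)
    (hbdd : ∀ f, X.N (mMed la0 f) ≤ ENNReal.ofReal C * X.N f)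
    (ga : ℝ) (hga : ga ∈ Set.Ioo (0 : ℝ) 1)
    (hgam : ∀ η : ℝ, η ∈ Set.Ioo (0 : ℝ) 1 →
      ∀ (f : (Fin n → ℝ) → ℝ≥0∞) (x : Fin n → ℝ),
        mMed (ga * η) f x ≤ mMed η (mMed la0 f) x) :
    ∀ la : ℝ, la ∈ Set.Ioo (0 : ℝ) 1 → ∀ f : (Fin n → ℝ) → ℝ≥0∞,
      X.N (mMed la f) ≤
        ENNReal.ofReal (C ^ 2 * la ^ (-(Real.log C / Real.log (1 / ga)))) * X.N f := by
  intro la hla f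
  -- pointwise iteration bound
  have hpt : ∀ (k : ℕ) (g : (Fin n → ℝ) → ℝ≥0∞) (x : Fin n → ℝ),
      mMed (ga ^ k * la0) g x ≤ (mMed la0)^[k + 1] g x := by
    intro k
    induction k with
    | zero => intro g x; simp
    | succ m ih =>
      intro g x
      have heta : ga ^ m * la0 ∈ Set.Ioo (0 : ℝ) 1 := by
        constructor
        · exact mul_pos (pow_pos hga.1 m) hla0.1
        · have h1 : ga ^ m ≤ 1 := pow_le_one₀ hga.1.le hga.2.le
          nlinarith [hla0.1, hla0.2]
      have h1 : mMed (ga * (ga ^ m * la0)) g x ≤ mMed (ga ^ m * la0) (mMed la0 g) x :=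
        hgam (ga ^ m * la0) heta g x
      have h2 : mMed (ga ^ m * la0) (mMed la0 g) x ≤ (mMed la0)^[m + 1] (mMed la0 g) x :=
        ih (mMed la0 g) x
      have heq : ga ^ (m + 1) * la0 = ga * (ga ^ m * la0) := by ring
      rw [heq, Function.iterate_succ_apply]
      exact h1.trans h2
  -- norm iteration bound
  have hnorm : ∀ (k : ℕ) (g : (Fin n → ℝ) → ℝ≥0∞),
      X.N ((mMed la0)^[k] g) ≤ ENNReal.ofReal C ^ k * X.N g := by
    intro k
    induction k with
    | zero => intro g; simp
    | succ m ih =>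
      intro g
      rw [Function.iterate_succ_apply']
      calc X.N (mMed la0 ((mMed la0)^[m] g)) ≤ ENNReal.ofReal C * X.N ((mMed la0)^[m] g) :=
            hbdd _
        _ ≤ ENNReal.ofReal C * (ENNReal.ofReal C ^ m * X.N g) := mul_le_mul_right (ih g) _
        _ = ENNReal.ofReal C ^ (m + 1) * X.N g := by ring
  -- choose minimal k with ga^k * la0 ≤ la
  have hex : ∃ k : ℕ, ga ^ k * la0 ≤ la := by
    obtain ⟨k, hk⟩ := exists_pow_lt_of_lt_one (div_pos hla.1 hla0.1) hga.2
    exact ⟨k, le_of_lt ((lt_div_iff₀ hla0.1).mp hk)⟩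
  set k := Nat.find hex with hkdef
  have hk : ga ^ k * la0 ≤ la := Nat.find_spec hex
  have hmin : ∀ j, j < k → la < ga ^ j * la0 := fun j hj =>
    lt_of_not_ge (Nat.find_min hex hj)
  have harith : C ^ (k + 1) ≤ C ^ 2 * la ^ (-(Real.log C / Real.log (1 / ga))) :=
    arith_aux hga.1 hga.2 hla0.2 hla.1 hla.2 hC k hmin
  calc X.N (mMed la f)
      ≤ X.N (mMed (ga ^ k * la0) f) :=
        X.mono _ _ (Filter.Eventually.of_forall fun x => mMed_anti' hk f x)
    _ ≤ X.N ((mMed la0)^[k + 1] f) :=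
        X.mono _ _ (Filter.Eventually.of_forall fun x => hpt k f x)
    _ ≤ ENNReal.ofReal C ^ (k + 1) * X.N f := hnorm (k + 1) f
    _ ≤ ENNReal.ofReal (C ^ 2 * la ^ (-(Real.log C / Real.log (1 / ga)))) * X.N f := by
        refine mul_le_mul_left ?_ _
        rw [← ENNReal.ofReal_pow (by linarith : (0:ℝ) ≤ C)]
        exact ENNReal.ofReal_le_ofReal harith
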